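/- For real (or complex) s with Re(s) > 1, the multiple zeta value ζ(2,2) := Σ_{m>n≥1} 1/(m² n²) equals (3/4)·ζ(4). -/

import Mathlib

open Real

private noncomputable def zf : ℕ → ℝ := fun n => (1 : ℝ) / (n : ℝ) ^ 2

private lemma zf_nonneg (n : ℕ) : 0 ≤ zf n := div_nonneg zero_le_one (by positivity)

private lemma hasSum_F :
    HasSum (fun p : ℕ × ℕ => zf p.1 * zf p.2) (π ^ 4 / 36) := by
  have h2 := hasSum_zeta_two
  have hsum : Summable (fun p : ℕ × ℕ => zf p.1 * zf p.2) :=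
    h2.summable.mul_of_nonneg h2.summable zf_nonneg zf_nonneg
  have := h2.mul h2 hsum
  convert this using 1
  · rfl
  · rfl
  · ring

/-- The double zeta value ζ(2,2) = Σ_{m>n≥1} 1/(m² n²) equals (3/4)·ζ(4). -/
theorem double_zeta_two_two :
    (∑' m : ℕ, ∑' n : ℕ, (if 1 ≤ n ∧ n < m then (1 : ℝ) / ((m : ℝ) ^ 2 * (n : ℝ) ^ 2) else 0))
      = (3 / 4) * ∑' n : ℕ, (1 : ℝ) / ((n : ℝ) + 1) ^ 4 := by
  set F : ℕ × ℕ → ℝ := fun p => zf p.1 * zf p.2 with hF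
  set u : ℕ × ℕ → ℝ := fun p => if p.2 < p.1 then F p else 0 with hu
  set v : ℕ × ℕ → ℝ := fun p => if p.1 < p.2 then F p else 0 with hv
  set w : ℕ × ℕ → ℝ := fun p => if p.1 = p.2 then F p else 0 with hw
  have hFnn : ∀ p, 0 ≤ F p := fun p => mul_nonneg (zf_nonneg _) (zf_nonneg _)
  -- u equals the iterated summand
  have hue : ∀ p : ℕ × ℕ, u p =
      (if 1 ≤ p.2 ∧ p.2 < p.1 then (1 : ℝ) / ((p.1 : ℝ) ^ 2 * (p.2 : ℝ) ^ 2) else 0) := by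
    intro ⟨m, n⟩
    rcases Nat.eq_zero_or_pos n with hn | hn
    · subst hn
      simp [hu, hF, zf]
    · simp only [hu, hF, zf]
      by_cases h : n < m <;> simp [h, hn, Nat.one_le_iff_ne_zero.mpr hn.ne', one_div, mul_inv,
        mul_pow]
      · rw [mul_comm]
  -- summability of u
  have husum : Summable u := by
    refine (hasSum_F.summable).of_nonneg_of_le (fun p => ?_) (fun p => ?_)
    · simp only [hu]; split
      · exact hFnn _
      · exact le_refl 0
    · simp only [hu]; split
      · exact le_refl _
      · exact hFnn _
  set S := ∑' p, u p with hS
  have huS : HasSum u S := husum.hasSum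
  -- v sums to the same value by symmetry
  have hvS : HasSum v S := by
    have h1 := (Equiv.prodComm ℕ ℕ).hasSum_iff.mpr huS
    have hvu : v = u ∘ ⇑(Equiv.prodComm ℕ ℕ) := by
      funext p
      simp only [hv, hu, hF, Function.comp_apply, Equiv.prodComm_apply, Prod.fst_swap,
        Prod.snd_swap]
      by_cases h : p.1 < p.2 <;> simp [h, mul_comm]
    rw [hvu]
    exact h1
  -- w sums to π^4/90
  have hwS : HasSum w (π ^ 4 / 90) := by
    have h4 := hasSum_zeta_four
    have hinj : Function.Injective (fun n : ℕ => ((n, n) : ℕ × ℕ)) := by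
      intro a b h; simpa using congrArg Prod.fst h
    refine (Function.Injective.hasSum_iff hinj ?_).mp ?_
    · intro p hp
      simp only [hw]
      rw [if_neg]
      intro h
      exact hp ⟨p.1, by simp [Prod.ext_iff, h]⟩
    · convert h4 using 2 with n
      simp only [hw, hF, zf, Function.comp_apply, if_pos rfl]
      rw [div_mul_div_comm, one_mul, ← pow_add]
      norm_num
  -- decomposition
  have hdec : ∀ p, F p = u p + v p + w p := by
    intro p
    simp only [hu, hv, hw]
    rcases lt_trichotomy p.1 p.2 with h | h | h
    · simp [h, h.ne, h.asymm]
    · simp [h, lt_irrefl]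
    · simp [h, h.ne', h.asymm]
  have htot : HasSum F (S + S + π ^ 4 / 90) := by
    have := (huS.add hvS).add hwS
    simpa only [← hdec] using this
  have hSval : S = π ^ 4 / 120 := by
    have := htot.unique hasSum_F
    linarith
  -- RHS zeta(4)
  have hrhs : (∑' n : ℕ, (1 : ℝ) / ((n : ℝ) + 1) ^ 4) = π ^ 4 / 90 := by
    have h4 := hasSum_zeta_four
    have h5 : HasSum (fun n : ℕ => (1 : ℝ) / ((n + 1 : ℕ) : ℝ) ^ 4) (π ^ 4 / 90) :=
      (hasSum_nat_add_iff (f := fun n : ℕ => (1 : ℝ) / (n : ℝ) ^ 4) 1).mpr (by simpa using h4)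
    have h6 : HasSum (fun n : ℕ => (1 : ℝ) / ((n : ℝ) + 1) ^ 4) (π ^ 4 / 90) := by
      convert h5 using 2 with n
      push_cast
      ring
    exact h6.tsum_eq
  -- conclude
  have hLHS : (∑' m : ℕ, ∑' n : ℕ,
      (if 1 ≤ n ∧ n < m then (1 : ℝ) / ((m : ℝ) ^ 2 * (n : ℝ) ^ 2) else 0)) = S := by
    rw [hS, husum.tsum_prod]
    congr 1; funext m; congr 1; funext n
    exact (hue (m, n)).symm
  rw [hLHS, hSval, hrhs]
  ring
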